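/- The same polynomial $\mathcal{M}_{(3/2)} = \frac{q(1-t)}{1-qt}p_1\pi_1 + \frac{1-q}{1-qt}\pi_2$ is an eigenvector with eigenvalue $q^2-1$ of the operator $\overline{\mathcal{D}}_2 := (q-1)p_1\partial_{p_1} + (q-1)\big(1+(q-1)(1-t^{-1})p_1\partial_{p_1}\big)\pi_1\partial_{\pi_1} + q(q-1)(1-t^{-1})p_1\pi_1\partial_{\pi_2} + t^{-1}(q-1)^2\partial_{p_1}\pi_2\partial_{\pi_1} + \tfrac12\big((q^2-1)(1+t^{-1}) - (1-q)^2(1-t^{-1})\big)\pi_2\partial_{\pi_2}$. -/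

import Mathlib

noncomputable section

variable {K : Type} [Field K] [CharZero K]

/-- The super-polynomial ring `K[p₁,p₂,…] ⊗ Λ[π₁,π₂,…]`, modelled by finitely supported
functions assigning to each finite set `T` of fermionic indices (the wedge monomial
`π_{t₁} ∧ ⋯ ∧ π_{t_m}`, indices increasing) a bosonic coefficient. -/
abbrev SP (K : Type) [Field K] := Finset ℕ →₀ MvPolynomial ℕ K

/-- Multiplication by a bosonic element `f`, acting coefficientwise. -/
def fmul (f : MvPolynomial ℕ K) (v : SP K) : SP K :=
  v.sum fun T r => Finsupp.single T (f * r)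

/-- A bosonic operator `A` (e.g. a differential operator in the `p`'s) acting
coefficientwise. -/
def fop (A : MvPolynomial ℕ K → MvPolynomial ℕ K) (v : SP K) : SP K :=
  v.sum fun T r => Finsupp.single T (A r)

/-- Left multiplication by the fermionic generator `π_k`:
`π_k · e_T = (-1)^{#{s∈T : s<k}} e_{T∪{k}}` for `k ∉ T`, and `0` otherwise. -/
def fermi (k : ℕ) (v : SP K) : SP K :=
  v.sum fun T r =>
    if k ∈ T then 0
    else Finsupp.single (insert k T)
      ((-1 : MvPolynomial ℕ K) ^ ((T.filter fun j => j < k).card) * r)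

/-- The odd derivation `∂_{π_k}` with `{∂_{π_k}, π_ℓ} = δ_{kℓ}`:
`∂_{π_k} e_T = (-1)^{#{s∈T : s<k}} e_{T\{k}}` for `k ∈ T`, and `0` otherwise. -/
def dfermi (k : ℕ) (v : SP K) : SP K :=
  v.sum fun T r =>
    if k ∈ T then
      Finsupp.single (T.erase k)
        ((-1 : MvPolynomial ℕ K) ^ ((T.filter fun j => j < k).card) * r)
    else 0

end

noncomputable section

open MvPolynomial

variable {K : Type} [Field K] [CharZero K]

/-- The level-`3/2` super Macdonald polynomial
`𝓜_{(3/2)} = q(1-t)/(1-qt) · p₁π₁ + (1-q)/(1-qt) · π₂`. -/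
def M32 (q t : K) : SP K :=
  Finsupp.single {1} (C (q * (1 - t) / (1 - q * t)) * X 1) +
    Finsupp.single {2} (C ((1 - q) / (1 - q * t)))

/-- The operator `𝒟̄₂ = (q-1) p₁∂_{p₁} + (q-1)(1 + (q-1)(1-t⁻¹) p₁∂_{p₁}) π₁∂_{π₁}
+ q(q-1)(1-t⁻¹) p₁ π₁ ∂_{π₂} + t⁻¹(q-1)² ∂_{p₁} π₂ ∂_{π₁}
+ ½((q²-1)(1+t⁻¹) - (1-q)²(1-t⁻¹)) π₂ ∂_{π₂}`. -/
def D2barOp (q t : K) (v : SP K) : SP K :=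
  fmul (C (q - 1) * X 1) (fop (pderiv 1) v) +
    (fmul (C (q - 1)) (fermi 1 (dfermi 1 v)) +
      fmul (C ((q - 1) * ((q - 1) * (1 - t⁻¹))) * X 1)
        (fop (pderiv 1) (fermi 1 (dfermi 1 v)))) +
    fmul (C (q * (q - 1) * (1 - t⁻¹)) * X 1) (fermi 1 (dfermi 2 v)) +
    fmul (C (t⁻¹ * (q - 1) ^ 2)) (fop (pderiv 1) (fermi 2 (dfermi 1 v))) +
    fmul (C (((q ^ 2 - 1) * (1 + t⁻¹) - (1 - q) ^ 2 * (1 - t⁻¹)) / 2))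
      (fermi 2 (dfermi 2 v))

set_option linter.unusedSectionVars false

lemma fmul_single (f : MvPolynomial ℕ K) (T : Finset ℕ) (r : MvPolynomial ℕ K) :
    fmul f (Finsupp.single T r) = Finsupp.single T (f * r) := by
  simp [fmul, Finsupp.sum_single_index]

lemma fmul_add (f : MvPolynomial ℕ K) (u v : SP K) :
    fmul f (u + v) = fmul f u + fmul f v := by
  simp [fmul]
  exact Finsupp.sum_add_index (by simp) (by intros; simp [mul_add, Finsupp.single_add])

lemma fop_single (T : Finset ℕ) (r : MvPolynomial ℕ K) :
    fop (pderiv 1) (Finsupp.single T r) = Finsupp.single T (pderiv 1 r) := by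
  simp [fop, Finsupp.sum_single_index]

lemma fop_add (u v : SP K) :
    fop (pderiv 1) (u + v) = fop (pderiv 1) u + fop (pderiv 1) v := by
  simp [fop]
  exact Finsupp.sum_add_index (by simp) (by intros; simp [Finsupp.single_add])

lemma fermi_single (k : ℕ) (T : Finset ℕ) (r : MvPolynomial ℕ K) :
    fermi k (Finsupp.single T r) = if k ∈ T then 0
    else Finsupp.single (insert k T)
      ((-1 : MvPolynomial ℕ K) ^ ((T.filter fun j => j < k).card) * r) := by
  rw [fermi, Finsupp.sum_single_index]
  split <;> simp

lemma fermi_add (k : ℕ) (u v : SP K) :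
    fermi k (u + v) = fermi k u + fermi k v := by
  simp [fermi]
  exact Finsupp.sum_add_index (by intros; split <;> simp)
    (by intros; split <;> simp [mul_add, Finsupp.single_add])

lemma dfermi_single (k : ℕ) (T : Finset ℕ) (r : MvPolynomial ℕ K) :
    dfermi k (Finsupp.single T r) = if k ∈ T then
      Finsupp.single (T.erase k)
        ((-1 : MvPolynomial ℕ K) ^ ((T.filter fun j => j < k).card) * r)
    else 0 := by
  rw [dfermi, Finsupp.sum_single_index]
  split <;> simp

lemma dfermi_add (k : ℕ) (u v : SP K) :
    dfermi k (u + v) = dfermi k u + dfermi k v := by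
  simp [dfermi]
  exact Finsupp.sum_add_index (by intros; split <;> simp)
    (by intros; split <;> simp [mul_add, Finsupp.single_add])


lemma fmul_zero' (f : MvPolynomial ℕ K) : fmul f (0 : SP K) = 0 := by simp [fmul]
lemma fop_zero' : fop (pderiv 1) (0 : SP K) = 0 := by simp [fop]
lemma fermi_zero' (k : ℕ) : fermi k (0 : SP K) = 0 := by simp [fermi]
lemma dfermi_zero' (k : ℕ) : dfermi k (0 : SP K) = 0 := by simp [dfermi]

lemma d1_s1 (r : MvPolynomial ℕ K) :
    dfermi 1 (Finsupp.single {1} r) = Finsupp.single ∅ r := by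
  rw [dfermi_single, if_pos (Finset.mem_singleton_self 1)]
  simp only [Finset.erase_singleton, Finset.filter_singleton, lt_self_iff_false,
    if_false, Finset.card_empty, pow_zero, one_mul]
lemma d1_s2 (r : MvPolynomial ℕ K) : dfermi 1 (Finsupp.single {2} r) = 0 := by
  rw [dfermi_single, if_neg (by decide)]
lemma d2_s1 (r : MvPolynomial ℕ K) : dfermi 2 (Finsupp.single {1} r) = 0 := by
  rw [dfermi_single, if_neg (by decide)]
lemma d2_s2 (r : MvPolynomial ℕ K) :
    dfermi 2 (Finsupp.single {2} r) = Finsupp.single ∅ r := by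
  rw [dfermi_single, if_pos (Finset.mem_singleton_self 2)]
  simp only [Finset.erase_singleton, Finset.filter_singleton, lt_self_iff_false,
    if_false, Finset.card_empty, pow_zero, one_mul]
lemma f1_s0 (r : MvPolynomial ℕ K) :
    fermi 1 (Finsupp.single ∅ r) = Finsupp.single {1} r := by
  rw [fermi_single, if_neg (Finset.notMem_empty 1)]
  simp only [Finset.filter_empty, Finset.card_empty, pow_zero, one_mul]
  rfl
lemma f2_s0 (r : MvPolynomial ℕ K) :
    fermi 2 (Finsupp.single ∅ r) = Finsupp.single {2} r := by
  rw [fermi_single, if_neg (Finset.notMem_empty 2)]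
  simp only [Finset.filter_empty, Finset.card_empty, pow_zero, one_mul]
  rfl

/-- `𝓜_{(3/2)}` is an eigenvector of `𝒟̄₂` with eigenvalue `q² - 1`. -/
theorem D2bar_eigen_M32 (q t : K) (hq : q ≠ 0) (ht : t ≠ 0) (hqt : q * t ≠ 1) :
    D2barOp q t (M32 q t) = fmul (C ((q : K) ^ 2 - 1)) (M32 q t) := by
  simp only [D2barOp, M32, fmul_add, fop_add, fermi_add, dfermi_add]
  simp only [d1_s1, d1_s2, d2_s1, d2_s2, fmul_zero', fop_zero',
    fermi_zero', dfermi_zero', fmul_single, fop_single, f1_s0, f2_s0,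
    pderiv_C_mul, pderiv_X_self, pderiv_C, mul_zero, Finsupp.single_zero,
    add_zero, zero_add, mul_one]
  simp only [← Finsupp.single_add]
  rw [add_assoc, ← Finsupp.single_add]
  have h1t : (1 : K) - q * t ≠ 0 := sub_ne_zero.mpr fun h => hqt h.symm
  have e1 : C (q-1) * X 1 * C (q*(1-t)/(1-q*t)) +
      (C (q-1) * (C (q*(1-t)/(1-q*t)) * X 1) +
        C ((q-1)*((q-1)*(1-t⁻¹))) * X 1 * C (q*(1-t)/(1-q*t))) +
      C (q*(q-1)*(1-t⁻¹)) * X 1 * C ((1-q)/(1-q*t)) =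
      (C (q^2-1) * (C (q*(1-t)/(1-q*t)) * X 1) : MvPolynomial ℕ K) := by
    have hc : (q-1)*(q*(1-t)/(1-q*t)) + ((q-1)*(q*(1-t)/(1-q*t))
        + (q-1)*((q-1)*(1-t⁻¹))*(q*(1-t)/(1-q*t)))
        + q*(q-1)*(1-t⁻¹)*((1-q)/(1-q*t)) = (q^2-1)*(q*(1-t)/(1-q*t)) := by
      field_simp
      ring
    calc _ = (C ((q-1)*(q*(1-t)/(1-q*t)) + ((q-1)*(q*(1-t)/(1-q*t))
          + (q-1)*((q-1)*(1-t⁻¹))*(q*(1-t)/(1-q*t)))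
          + q*(q-1)*(1-t⁻¹)*((1-q)/(1-q*t))) * X 1 : MvPolynomial ℕ K) := by
          simp only [C_add, C_mul]; ring
      _ = _ := by rw [hc]; simp only [C_mul]; ring
  have e2 : C (t⁻¹*(q-1)^2) * C (q*(1-t)/(1-q*t)) +
      C (((q^2-1)*(1+t⁻¹) - (1-q)^2*(1-t⁻¹))/2) * C ((1-q)/(1-q*t)) =
      (C (q^2-1) * C ((1-q)/(1-q*t)) : MvPolynomial ℕ K) := by
    rw [← C_mul, ← C_mul, ← C_add, ← C_mul]
    congr 1
    field_simp
    ring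
  rw [e1, e2]

end
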